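/- Let G be a finite group, p a prime, N a normal subgroup of G, P a Sylow p-subgroup of G, and x ∈ P. Then λ_G(x) = λ_{G/N}(xN) · λ_{NP}(x), where NP is the subgroup of G generated by N and P, λ_{NP}(x) is the number of Sylow p-subgroups of NP containing x, and λ_{G/N}(xN) is the number of Sylow p-subgroups of the quotient G/N containing the coset xN. -/

import Mathlib

open Subgroup

/-- `λ_G(x)`: the number of Sylow `p`-subgroups of `G` containing `x`. -/
noncomputable def sylCount (p : ℕ) {G : Type*} [Group G] (x : G) : ℕ :=
  Nat.card {Q : Sylow p G // x ∈ Q}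

section Helpers

open Pointwise

/-- Counting lemma: if a map `f` has constant fiber-cardinality `c` over points satisfying `pr`
(relative to a constraint `q` implying `pr ∘ f`), then the count of `q` factors. -/
lemma core_count {α β : Type*} [Finite α] [Finite β] (f : α → β)
    (q : α → Prop) (pr : β → Prop)
    (hqp : ∀ a, q a → pr (f a)) (c : ℕ)
    (hc : ∀ b, pr b → Nat.card {a // q a ∧ f a = b} = c) :
    Nat.card {a // q a} = Nat.card {b // pr b} * c := by
  classical
  cases nonempty_fintype α
  cases nonempty_fintype β
  simp only [Nat.card_eq_fintype_card] at *
  rw [Fintype.card_subtype, Fintype.card_subtype]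
  rw [Finset.card_eq_sum_card_fiberwise (f := f) (t := Finset.univ.filter pr)
    (fun a ha => by simp only [Finset.mem_coe, Finset.mem_filter, Finset.mem_univ, true_and] at ha ⊢
                    exact hqp a ha)]
  rw [Finset.sum_congr rfl (fun b hb => ?_), Finset.sum_const, smul_eq_mul]
  have hb' : pr b := by simpa using hb
  rw [← hc b hb', Fintype.card_subtype, Finset.filter_filter]

variable {G : Type*} [Group G] {G' : Type*} [Group G']

/-- Image of a conjugate subgroup. -/
lemma map_conj_smul (f : G →* G') (g : G) (A : Subgroup G) :
    Subgroup.map f (MulAut.conj g • A) = MulAut.conj (f g) • Subgroup.map f A := by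
  ext z
  simp only [Subgroup.mem_map, Subgroup.mem_pointwise_smul_iff_inv_smul_mem]
  constructor
  · rintro ⟨a, ha, rfl⟩
    refine ⟨g⁻¹ * a * g, by simpa [mul_assoc] using ha, by simp [mul_assoc]⟩
  · rintro ⟨a, ha, hz⟩
    refine ⟨g * a * g⁻¹, by simpa [mul_assoc] using ha, ?_⟩
    simp only [MulAut.smul_def, MulAut.conj_inv_apply] at hz
    simp only [map_mul, map_inv, hz]
    group

/-- If the image of `H'` mod `N` is a `p`-group then `H'/(N ∩ H')` is a `p`-group. -/
lemma pg_quot {p : ℕ} (N : Subgroup G) [N.Normal] (H' : Subgroup G)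
    (h : IsPGroup p (Subgroup.map (QuotientGroup.mk' N) H')) :
    IsPGroup p (↥H' ⧸ N.subgroupOf H') := by
  intro q
  induction q using QuotientGroup.induction_on with
  | H h' =>
    obtain ⟨k, hk⟩ := h ⟨QuotientGroup.mk' N h'.1, Subgroup.mem_map_of_mem _ h'.2⟩
    refine ⟨k, ?_⟩
    rw [← QuotientGroup.mk_pow, QuotientGroup.eq_one_iff, Subgroup.mem_subgroupOf]
    have : (QuotientGroup.mk' N) (h'.1 ^ p ^ k) = 1 := by
      have h2 := congrArg Subtype.val hk
      simp only [SubmonoidClass.coe_pow, OneMemClass.coe_one] at h2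
      rw [map_pow]; exact h2
    simpa only [SubmonoidClass.coe_pow] using (QuotientGroup.eq_one_iff _).mp this

variable {p : ℕ} {K : Type*} [Group K]

lemma sylow_mem_smul {a g : K} {R : Sylow p K} : a ∈ g • R ↔ g⁻¹ * a * g ∈ R := by
  have : a ∈ (↑(g • R) : Subgroup K) ↔ a ∈ MulAut.conj g • (R : Subgroup K) := by
    rw [Sylow.coe_subgroup_smul]
  rw [show (a ∈ g • R) ↔ a ∈ (↑(g • R) : Subgroup K) from Iff.rfl, this,
    Subgroup.mem_pointwise_smul_iff_inv_smul_mem]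
  simp [mul_assoc, SetLike.mem_coe]
  rfl

lemma sylow_smul_self {r : K} {R : Sylow p K} (hr : r ∈ R) : r • R = R :=
  Sylow.smul_eq_iff_mem_normalizer.mpr (Subgroup.le_normalizer hr)

/-- In a finite group with `K/N''` a `p`-group, every element decomposes as
`n * r` with `n ∈ N''` and `r` in a given Sylow subgroup. -/
lemma fact_decomp [Finite K] [hfp : Fact p.Prime] (N'' : Subgroup K) [N''.Normal]
    (PG : IsPGroup p (K ⧸ N'')) (R : Sylow p K) (k : K) :
    ∃ n ∈ N'', ∃ r ∈ (R : Subgroup K), k = n * r := by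
  have hsurj := QuotientGroup.mk'_surjective N''
  let Smap : Sylow p (K ⧸ N'') := R.mapSurjective hsurj
  have htop : (⊤ : Subgroup (K ⧸ N'')) = Smap := by
    refine Smap.3 (fun g => ?_) le_top
    obtain ⟨k', hk'⟩ := PG g.1
    exact ⟨k', Subtype.ext (by push_cast; exact hk')⟩
  have hmem : QuotientGroup.mk' N'' k ∈ Subgroup.map (QuotientGroup.mk' N'') R := by
    rw [← Sylow.coe_mapSurjective hsurj]
    exact htop ▸ Subgroup.mem_top _
  obtain ⟨r, hr, hrk⟩ := hmem
  obtain ⟨z, hz, hzk⟩ := (QuotientGroup.mk'_eq_mk' N'').mp hrk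
  exact ⟨r * z * r⁻¹, ‹N''.Normal›.conj_mem z hz r, r, hr, by
    rw [← hzk]; group⟩

lemma trans_conj [Finite K] [hfp : Fact p.Prime] (N'' : Subgroup K) [N''.Normal]
    (PG : IsPGroup p (K ⧸ N'')) (R₁ R₂ : Sylow p K) :
    ∃ n ∈ N'', n • R₁ = R₂ := by
  obtain ⟨k, hk⟩ := MulAction.exists_smul_eq K R₁ R₂
  obtain ⟨n, hn, r, hr, rfl⟩ := fact_decomp N'' PG R₁ k
  exact ⟨n, hn, by rw [← hk, mul_smul, sylow_smul_self hr]⟩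

variable {p : ℕ} {K : Type*} [Group K]

lemma index_subgroupOf_eq_index {W'' R' : Subgroup K}
    (hdec : ∀ k : K, ∃ w ∈ W'', ∃ r ∈ R', k = w * r) :
    (R'.subgroupOf W'').index = R'.index := by
  rw [Subgroup.index_eq_card, Subgroup.index_eq_card]
  refine Nat.card_congr (Equiv.ofBijective
    (Quotient.map' (fun w => (w : K)) ?_) ⟨?_, ?_⟩)
  · intro a b hab
    rw [QuotientGroup.leftRel_apply] at hab ⊢
    simpa [Subgroup.mem_subgroupOf] using hab
  · intro a b
    induction a using Quotient.inductionOn'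
    induction b using Quotient.inductionOn'
    rename_i a b
    intro hab
    rw [Quotient.map'_mk'', Quotient.map'_mk''] at hab
    have h1 : (a : K)⁻¹ * b ∈ R' := (QuotientGroup.eq (s := R')).mp hab
    refine Quotient.sound' ?_
    rw [QuotientGroup.leftRel_apply]
    simpa [Subgroup.mem_subgroupOf] using h1
  · intro q
    induction q using Quotient.inductionOn'
    rename_i k
    obtain ⟨w, hw, r, hr, rfl⟩ := hdec k
    refine ⟨Quotient.mk'' (⟨w, hw⟩ : ↥W''), ?_⟩
    simp only [Quotient.map'_mk'']
    show QuotientGroup.mk w = QuotientGroup.mk (w * r)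
    exact ((QuotientGroup.eq (s := R')).mpr (by simpa using hr)).symm

variable [Finite K] [Fact p.Prime]

/-- The intersection of a Sylow subgroup with a "co-p'" subgroup `W''` is Sylow in `W''`. -/
noncomputable def sylowInter (R : Sylow p K) (W'' : Subgroup K)
    (hdec : ∀ k : K, ∃ w ∈ W'', ∃ r ∈ (R : Subgroup K), k = w * r) : Sylow p ↥W'' :=
  (R.2.comap_subtype).toSylow (by
    rw [show comap W''.subtype (R : Subgroup K) = (R : Subgroup K).subgroupOf W'' from rfl,
      index_subgroupOf_eq_index hdec]
    exact R.not_dvd_index)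

lemma coe_sylowInter (R : Sylow p K) (W'' : Subgroup K) (hdec) :
    (sylowInter R W'' hdec : Subgroup ↥W'') = (R : Subgroup K).subgroupOf W'' := rfl

lemma mem_sylowInter {R : Sylow p K} {W'' : Subgroup K} {hdec} {a : ↥W''} :
    a ∈ sylowInter R W'' hdec ↔ (a : K) ∈ R :=
  Subgroup.mem_subgroupOf

variable {p : ℕ} {K₁ K₂ : Type*} [Group K₁] [Group K₂]

/-- Transport Sylow subgroups along a group isomorphism. -/
noncomputable def sylowEquivOfMulEquiv (e : K₁ ≃* K₂) : Sylow p K₁ ≃ Sylow p K₂ where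
  toFun T := T.comapOfInjective e.symm.toMonoidHom
    (show Function.Injective e.symm.toMonoidHom from e.symm.injective)
    (by rw [MonoidHom.range_eq_top_of_surjective _ e.symm.surjective]; exact le_top)
  invFun S := S.comapOfInjective e.toMonoidHom
    (show Function.Injective e.toMonoidHom from e.injective)
    (by rw [MonoidHom.range_eq_top_of_surjective _ e.surjective]; exact le_top)
  left_inv T := by
    apply Sylow.ext
    rw [Sylow.coe_comapOfInjective, Sylow.coe_comapOfInjective, Subgroup.comap_comap]
    have : (e.symm.toMonoidHom.comp e.toMonoidHom) = MonoidHom.id K₁ := by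
      ext z; simp
    rw [this, Subgroup.comap_id]
  right_inv S := by
    apply Sylow.ext
    rw [Sylow.coe_comapOfInjective, Sylow.coe_comapOfInjective, Subgroup.comap_comap]
    have : (e.toMonoidHom.comp e.symm.toMonoidHom) = MonoidHom.id K₂ := by
      ext z; simp
    rw [this, Subgroup.comap_id]

lemma mem_sylowEquivOfMulEquiv {e : K₁ ≃* K₂} {T : Sylow p K₁} {a : K₁} :
    e a ∈ sylowEquivOfMulEquiv (p := p) e T ↔ a ∈ T := by
  show e a ∈ (sylowEquivOfMulEquiv (p := p) e T : Subgroup K₂) ↔ _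
  rw [show ((sylowEquivOfMulEquiv (p := p) e T : Subgroup K₂))
      = Subgroup.comap e.symm.toMonoidHom T from rfl]
  simp [Subgroup.mem_comap]
  rfl

end Helpers
section LemmaB

open Subgroup Pointwise MulAction

lemma card_fiber_translate {α β : Type*} (f : α → β) (eα : Equiv.Perm α) (eβ : Equiv.Perm β)
    (hcomm : ∀ a, f (eα a) = eβ (f a)) (b : β) :
    Nat.card {a // f a = b} = Nat.card {a // f a = eβ b} :=
  Nat.card_congr (Equiv.subtypeEquiv eα (fun a => by
    rw [hcomm a, Equiv.apply_eq_iff_eq]))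

variable {p : ℕ} {K : Type*} [Group K] [Finite K] [Fact p.Prime]

/-- Key lemma: for `N'' ⊴ K` with `K/N''` a `p`-group and `N'' ≤ W''`,
`λ_K(y) * n_p(W'') = λ_{W''}(y) * n_p(K)`. -/
lemma lambda_mul_eq (N'' : Subgroup K) [N''.Normal] (PG : IsPGroup p (K ⧸ N''))
    (W'' : Subgroup K) (hNW : N'' ≤ W'') (y : K) (hyW : y ∈ W'') :
    Nat.card {R : Sylow p K // y ∈ R} * Nat.card (Sylow p ↥W'') =
      Nat.card {T : Sylow p ↥W'' // (⟨y, hyW⟩ : ↥W'') ∈ T} * Nat.card (Sylow p K) := by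
  classical
  -- the decomposition property
  have hdec : ∀ (R : Sylow p K) (k : K), ∃ w ∈ W'', ∃ r ∈ (R : Subgroup K), k = w * r := by
    intro R k
    obtain ⟨n, hn, r, hr, rfl⟩ := fact_decomp N'' PG R k
    exact ⟨n, hNW hn, r, hr, rfl⟩
  -- the map R ↦ R ∩ W''
  set f : Sylow p K → Sylow p ↥W'' := fun R => sylowInter R W'' (hdec R) with hf
  have hmemf : ∀ (R : Sylow p K) (a : ↥W''), a ∈ f R ↔ (a : K) ∈ R := fun R a => mem_sylowInter
  -- equivariance
  have hequiv : ∀ (n : ↥W'') (R : Sylow p K), f ((n : K) • R) = n • f R := by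
    intro n R
    apply Sylow.ext
    apply SetLike.ext
    intro a
    rw [show a ∈ (f ((n:K) • R) : Subgroup ↥W'') ↔ a ∈ f ((n:K) • R) from Iff.rfl]
    rw [show a ∈ (↑(n • f R) : Subgroup ↥W'') ↔ a ∈ n • f R from Iff.rfl]
    rw [hmemf, sylow_mem_smul, sylow_mem_smul, hmemf]
    push_cast
    rfl
  -- p-group property of W''/N''
  have PGW : IsPGroup p (↥W'' ⧸ N''.subgroupOf W'') := by
    apply pg_quot
    exact IsPGroup.to_subgroup PG _
  -- constancy of the fibers of f
  obtain ⟨T₀⟩ : Nonempty (Sylow p ↥W'') := inferInstance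
  set c : ℕ := Nat.card {R : Sylow p K // f R = T₀} with hc
  have hconst : ∀ T : Sylow p ↥W'', Nat.card {R : Sylow p K // f R = T} = c := by
    intro T
    obtain ⟨ν, hν, hνT⟩ := trans_conj (N''.subgroupOf W'') PGW T T₀
    rw [hc, ← hνT]
    simpa [MulAction.toPerm_apply] using (card_fiber_translate f (MulAction.toPerm (ν : K))
      (MulAction.toPerm ν) (fun R => hequiv ν R) T)
  -- total count
  have htot : Nat.card (Sylow p K) = Nat.card (Sylow p ↥W'') * c := by
    have := core_count f (fun _ => True) (fun _ => True) (fun _ _ => trivial) c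
      (fun T _ => by
        rw [← hconst T]
        exact Nat.card_congr (Equiv.subtypeEquivRight (fun R => iff_of_eq (true_and _))))
    rw [Nat.card_congr (Equiv.subtypeUnivEquiv (fun _ => trivial)).symm,
        Nat.card_congr (Equiv.subtypeUnivEquiv (p := fun _ : Sylow p ↥W'' => True)
          (fun _ => trivial)).symm]
    exact this
  -- count with y
  have hy : Nat.card {R : Sylow p K // y ∈ R} =
      Nat.card {T : Sylow p ↥W'' // (⟨y, hyW⟩ : ↥W'') ∈ T} * c := by
    refine core_count f (fun R => y ∈ R) (fun T => (⟨y, hyW⟩ : ↥W'') ∈ T)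
      (fun R hR => (hmemf R _).mpr hR) c (fun T hT => ?_)
    rw [← hconst T]
    refine Nat.card_congr (Equiv.subtypeEquivRight (fun R => ?_))
    constructor
    · rintro ⟨-, h⟩; exact h
    · rintro rfl
      exact ⟨(hmemf R _).mp hT, rfl⟩
  rw [hy, htot]
  ring
end LemmaB
section LemmaBprime

open Subgroup Pointwise

variable {G : Type*} [Group G] [Finite G] {p : ℕ} [Fact p.Prime]

lemma lambda_sub (N : Subgroup G) [N.Normal] (H : Subgroup G) (hNH : N ≤ H)
    (PGH : IsPGroup p (↥H ⧸ N.subgroupOf H)) (x : G) (hxH : x ∈ H) :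
    Nat.card {R : Sylow p ↥H // (⟨x, hxH⟩ : ↥H) ∈ R} *
        Nat.card (Sylow p ↥(N ⊔ zpowers x)) =
      Nat.card {T : Sylow p ↥(N ⊔ zpowers x) //
          (⟨x, mem_sup_right (mem_zpowers x)⟩ : ↥(N ⊔ zpowers x)) ∈ T} *
        Nat.card (Sylow p ↥H) := by
  classical
  set W : Subgroup G := N ⊔ zpowers x with hW
  have hWH : W ≤ H := sup_le hNH (by rwa [zpowers_le])
  have hNW : N.subgroupOf H ≤ W.subgroupOf H := comap_mono le_sup_left
  have hyW : (⟨x, hxH⟩ : ↥H) ∈ W.subgroupOf H :=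
    mem_subgroupOf.mpr (mem_sup_right (mem_zpowers x))
  have key := lambda_mul_eq (N.subgroupOf H) PGH (W.subgroupOf H) hNW ⟨x, hxH⟩ hyW
  -- transport from `W.subgroupOf H` to `W`
  set e : ↥(W.subgroupOf H) ≃* ↥W := subgroupOfEquivOfLe hWH with he
  set Ψ : Sylow p ↥(W.subgroupOf H) ≃ Sylow p ↥W := sylowEquivOfMulEquiv e with hΨ
  have h1 : Nat.card (Sylow p ↥(W.subgroupOf H)) = Nat.card (Sylow p ↥W) :=
    Nat.card_congr Ψ
  have h2 : Nat.card {T' : Sylow p ↥(W.subgroupOf H) //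
        (⟨⟨x, hxH⟩, hyW⟩ : ↥(W.subgroupOf H)) ∈ T'} =
      Nat.card {T : Sylow p ↥W //
        (⟨x, mem_sup_right (mem_zpowers x)⟩ : ↥W) ∈ T} := by
    refine Nat.card_congr (Equiv.subtypeEquiv Ψ (fun T' => ?_))
    have : e ⟨⟨x, hxH⟩, hyW⟩ = (⟨x, mem_sup_right (mem_zpowers x)⟩ : ↥W) := rfl
    rw [← this, hΨ]
    exact (mem_sylowEquivOfMulEquiv (e := e)).symm
  rw [h1, h2] at key
  exact key

end LemmaBprime
section StepA

open Subgroup Pointwise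

variable {G : Type*} [Group G] [Finite G] {p : ℕ} [Fact p.Prime]
variable (N : Subgroup G) [N.Normal]

lemma ker_le_comap_sylow (S : Sylow p (G ⧸ N)) :
    N ≤ (S : Subgroup (G ⧸ N)).comap (QuotientGroup.mk' N) := fun n hn =>
  Subgroup.mem_comap.mpr (by
    have h1 : (QuotientGroup.mk' N) n = 1 := (QuotientGroup.eq_one_iff n).mpr hn
    rw [h1]; exact one_mem _)

lemma pg_quot_comap_sylow (S : Sylow p (G ⧸ N)) :
    IsPGroup p (↥((S : Subgroup (G ⧸ N)).comap (QuotientGroup.mk' N)) ⧸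
      N.subgroupOf ((S : Subgroup (G ⧸ N)).comap (QuotientGroup.mk' N))) := by
  apply pg_quot
  rw [Subgroup.map_comap_eq_self_of_surjective (QuotientGroup.mk'_surjective N)]
  exact S.2

lemma stepA (S : Sylow p (G ⧸ N)) :
    ∃ E : {Q : Sylow p G // Q.mapSurjective (QuotientGroup.mk'_surjective N) = S} ≃
        Sylow p ↥((S : Subgroup (G ⧸ N)).comap (QuotientGroup.mk' N)),
      ∀ (Q) (g : G) (hgH : g ∈ (S : Subgroup (G ⧸ N)).comap (QuotientGroup.mk' N)),
        (g ∈ Q.1 ↔ (⟨g, hgH⟩ : ↥((S : Subgroup (G ⧸ N)).comap (QuotientGroup.mk' N))) ∈ E Q) := by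
  classical
  set bar := QuotientGroup.mk' N with hbar
  set H : Subgroup G := (S : Subgroup (G ⧸ N)).comap bar with hH
  have hle : ∀ Q : {Q : Sylow p G // Q.mapSurjective (QuotientGroup.mk'_surjective N) = S},
      (Q.1 : Subgroup G) ≤ H := by
    rintro ⟨Q, hQ⟩
    have h1 : Subgroup.map bar (Q : Subgroup G) = (S : Subgroup (G ⧸ N)) := by
      rw [← Sylow.coe_mapSurjective (QuotientGroup.mk'_surjective N) Q, hQ]
    exact le_trans (Subgroup.le_comap_map _ _) (le_of_eq (by rw [h1]))
  set F : {Q : Sylow p G // Q.mapSurjective (QuotientGroup.mk'_surjective N) = S} →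
      Sylow p ↥H := fun Q => Q.1.subtype (hle Q) with hF
  have hbij : Function.Bijective F := by
    constructor
    · rintro ⟨Q₁, h₁⟩ ⟨Q₂, h₂⟩ h
      exact Subtype.ext (Sylow.subtype_injective h)
    · intro R
      obtain ⟨Q, hRQ⟩ := (R.2.map H.subtype).exists_le_sylow
      have hSle : (S : Subgroup (G ⧸ N)) ≤ Subgroup.map bar ↑Q := by
        intro sb hsb
        obtain ⟨s, rfl⟩ := QuotientGroup.mk'_surjective N sb
        have hsH : s ∈ H := Subgroup.mem_comap.mpr hsb
        obtain ⟨n, hn, r, hr, hdec⟩ :=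
          fact_decomp (N.subgroupOf H) (pg_quot_comap_sylow N S) R ⟨s, hsH⟩
        have hsval : s = (n : G) * (r : G) := congrArg Subtype.val hdec
        have hbn : bar (n : G) = 1 := (QuotientGroup.eq_one_iff _).mpr hn
        refine ⟨(r : G), hRQ (Subgroup.mem_map_of_mem _ hr), ?_⟩
        rw [hsval, map_mul, hbn, one_mul]
      have hQS : Subgroup.map bar ↑Q = (S : Subgroup (G ⧸ N)) := S.3 (Q.2.map bar) hSle
      have hΦQ : Q.mapSurjective (QuotientGroup.mk'_surjective N) = S :=
        Sylow.ext (by rw [Sylow.coe_mapSurjective]; exact hQS)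
      have hQH : (Q : Subgroup G) ≤ H := fun q hq =>
        Subgroup.mem_comap.mpr (hQS ▸ Subgroup.mem_map_of_mem bar hq)
      refine ⟨⟨Q, hΦQ⟩, ?_⟩
      apply Sylow.ext
      have hRiso : (R : Subgroup ↥H) ≤ (Q : Subgroup G).subgroupOf H := fun a ha =>
        Subgroup.mem_subgroupOf.mpr (hRQ (Subgroup.mem_map_of_mem _ ha))
      exact R.3 (Q.subtype hQH).2 hRiso
  refine ⟨Equiv.ofBijective F hbij, ?_⟩
  rintro ⟨Q, hQ⟩ g hgH
  exact ⟨fun h => Subgroup.mem_subgroupOf.mpr h, fun h => Subgroup.mem_subgroupOf.mp h⟩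

end StepA
section Main

open Subgroup Pointwise

variable {G : Type*} [Group G] [Finite G] {p : ℕ} [Fact p.Prime]
variable (N : Subgroup G) [N.Normal]

lemma phi_equivariant (g : G) (Q : Sylow p G) :
    (g • Q).mapSurjective (QuotientGroup.mk'_surjective N) =
      (QuotientGroup.mk' N g) • Q.mapSurjective (QuotientGroup.mk'_surjective N) := by
  apply Sylow.ext
  rw [Sylow.coe_mapSurjective, Sylow.coe_subgroup_smul, Sylow.coe_subgroup_smul,
    Sylow.coe_mapSurjective, map_conj_smul]

lemma phi_fiber_const (S₁ S₂ : Sylow p (G ⧸ N)) :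
    Nat.card {Q : Sylow p G // Q.mapSurjective (QuotientGroup.mk'_surjective N) = S₁} =
      Nat.card {Q : Sylow p G // Q.mapSurjective (QuotientGroup.mk'_surjective N) = S₂} := by
  obtain ⟨gb, hgb⟩ := MulAction.exists_smul_eq (G ⧸ N) S₁ S₂
  obtain ⟨g, rfl⟩ := QuotientGroup.mk'_surjective N gb
  have := card_fiber_translate (fun Q : Sylow p G =>
      Q.mapSurjective (QuotientGroup.mk'_surjective N))
    (MulAction.toPerm g) (MulAction.toPerm (QuotientGroup.mk' N g))
    (fun Q => phi_equivariant N g Q) S₁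
  have h2 : (MulAction.toPerm ((QuotientGroup.mk' N) g)) S₁ = S₂ := hgb
  rw [this, h2]

end Main


theorem lambda_aux_main {G : Type*} [Group G] [Fintype G]
    (p : ℕ) (hp : p.Prime) (N : Subgroup G) (hN : N.Normal)
    (P : Sylow p G) (x : G) (hx : x ∈ P) :
    Nat.card {Q : Sylow p G // x ∈ Q} =
      Nat.card {Q : Sylow p (G ⧸ N) // (x : G ⧸ N) ∈ Q} *
        Nat.card {Q : Sylow p ↥(N ⊔ (P : Subgroup G)) //
          (⟨x, Subgroup.mem_sup_right hx⟩ : ↥(N ⊔ (P : Subgroup G))) ∈ Q} := by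
  classical
  haveI := Fact.mk hp
  haveI := hN
  set bar := QuotientGroup.mk' N with hbar
  set Φ : Sylow p G → Sylow p (G ⧸ N) :=
    fun Q => Q.mapSurjective (QuotientGroup.mk'_surjective N) with hΦ
  set c₂ : ℕ := Nat.card {Q : Sylow p ↥(N ⊔ (P : Subgroup G)) //
    (⟨x, Subgroup.mem_sup_right hx⟩ : ↥(N ⊔ (P : Subgroup G))) ∈ Q} with hc₂
  -- p-group property for N ⊔ P
  have hmapNP : Subgroup.map bar (N ⊔ (P : Subgroup G)) = Subgroup.map bar (P : Subgroup G) := by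
    rw [Subgroup.map_sup]
    have hbot : Subgroup.map bar N = ⊥ :=
      (Subgroup.map_eq_bot_iff _).mpr (le_of_eq (QuotientGroup.ker_mk' N).symm)
    rw [hbot, bot_sup_eq]
  have hPGNP : IsPGroup p (↥(N ⊔ (P : Subgroup G)) ⧸ N.subgroupOf (N ⊔ (P : Subgroup G))) := by
    apply pg_quot
    rw [hmapNP]
    exact P.2.map bar
  -- the common auxiliary quantities
  set nW : ℕ := Nat.card (Sylow p ↥(N ⊔ zpowers x)) with hnW
  have hnWpos : 0 < nW := Nat.card_pos
  -- key identity for N ⊔ P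
  have key2 := lambda_sub N (N ⊔ (P : Subgroup G)) le_sup_left hPGNP x
    (Subgroup.mem_sup_right hx)
  -- value of fiber over Φ P
  have hcomap : Subgroup.comap bar ((Φ P : Subgroup (G ⧸ N))) = N ⊔ (P : Subgroup G) := by
    rw [hΦ, Sylow.coe_mapSurjective, Subgroup.comap_map_eq, QuotientGroup.ker_mk', sup_comm]
  obtain ⟨E₀, -⟩ := stepA N (Φ P)
  have hfib0 : Nat.card {Q : Sylow p G // Φ Q = Φ P} =
      Nat.card (Sylow p ↥(N ⊔ (P : Subgroup G))) := by
    rw [Nat.card_congr E₀]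
    rw [hcomap]
  -- main counting
  refine core_count Φ (fun Q => x ∈ Q) (fun S => (x : G ⧸ N) ∈ S) ?_ c₂ ?_
  · intro Q hQ
    show (x : G ⧸ N) ∈ (Φ Q : Subgroup (G ⧸ N))
    rw [hΦ, Sylow.coe_mapSurjective]
    exact Subgroup.mem_map_of_mem bar hQ
  · intro S hxS
    obtain ⟨E, hE⟩ := stepA N S
    have hxH : x ∈ Subgroup.comap bar ((S : Subgroup (G ⧸ N))) := Subgroup.mem_comap.mpr hxS
    -- identify the fiber with Sylows of H
    have hfibx : Nat.card {Q : Sylow p G // x ∈ Q ∧ Φ Q = S} =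
        Nat.card {R : Sylow p ↥(Subgroup.comap bar ((S : Subgroup (G ⧸ N)))) //
          (⟨x, hxH⟩ : ↥(Subgroup.comap bar ((S : Subgroup (G ⧸ N))))) ∈ R} := by
      refine Nat.card_congr (Equiv.trans ?_ (Equiv.subtypeEquiv E (fun q => hE q x hxH)))
      exact {
        toFun := fun Q => ⟨⟨Q.1, Q.2.2⟩, Q.2.1⟩
        invFun := fun q => ⟨q.1.1, q.2, q.1.2⟩
        left_inv := fun _ => rfl
        right_inv := fun _ => rfl }
    have key1 := lambda_sub N (Subgroup.comap bar ((S : Subgroup (G ⧸ N))))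
      (ker_le_comap_sylow N S) (pg_quot_comap_sylow N S) x hxH
    -- n_H = n_{N ⊔ P}
    have hnH : Nat.card (Sylow p ↥(Subgroup.comap bar ((S : Subgroup (G ⧸ N))))) =
        Nat.card (Sylow p ↥(N ⊔ (P : Subgroup G))) := by
      obtain ⟨E', -⟩ := stepA N S
      rw [← Nat.card_congr E', phi_fiber_const N S (Φ P), hfib0]
    rw [hfibx]
    -- cancel nW
    refine Nat.eq_of_mul_eq_mul_right hnWpos ?_
    rw [key1, hnH, ← key2]

/-- Lemma: if `N ⊴ G`, `P` is a Sylow `p`-subgroup of `G` and `x ∈ P`, then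
`λ_G(x) = λ_{G/N}(xN) · λ_{NP}(x)`. -/
theorem lambda_eq_lambda_quotient_mul_lambda_sup {G : Type*} [Group G] [Fintype G]
    (p : ℕ) (hp : p.Prime) (N : Subgroup G) (hN : N.Normal)
    (P : Sylow p G) (x : G) (hx : x ∈ P) :
    sylCount p x =
      Nat.card {Q : Sylow p (G ⧸ N) // (x : G ⧸ N) ∈ Q} *
        Nat.card {Q : Sylow p ↥(N ⊔ (P : Subgroup G)) //
          (⟨x, Subgroup.mem_sup_right hx⟩ : ↥(N ⊔ (P : Subgroup G))) ∈ Q} :=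
  lambda_aux_main p hp N hN P x hx
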